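/- Let X_{ij}, i ∈ {1,...,n}, j ∈ {1,...,p}, be iid Rademacher random variables, T_n = n^{-1/2} Σ_{i=1}^n X_i, and A = (−∞, √n]^p. Then P(T_n ∈ A) = 1; moreover, [Φ(√n)]^p ≤ [1 − 2 e^{−n/2} / (√(2π)(√(n+4) + √n))]^p, and if p ≥ √(π/2)(√(n+4) + √n) e^{n/2}, then [Φ(√n)]^p ≤ 2/e for all sufficiently large n. Consequently, under this growth of p, ρ_{n,A^re} ≥ 1 − 2/e for all sufficiently large n. -/

import Mathlib

open MeasureTheory ProbabilityTheory Filter Real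

/-- The Rademacher distribution on `ℝ`: `P({1}) = P({-1}) = 1/2`. -/
noncomputable def radMeasure : Measure ℝ :=
  (2⁻¹ : ENNReal) • Measure.dirac (1 : ℝ) + (2⁻¹ : ENNReal) • Measure.dirac (-1 : ℝ)

/-- The distribution of a `p`-dimensional standard Gaussian random vector. -/
noncomputable def stdGaussianPi (p : ℕ) : Measure (Fin p → ℝ) :=
  Measure.pi fun _ => gaussianReal 0 1

/-- The hyper-rectangle `∏_{j=1}^p ([a_j, b_j] ∩ ℝ)` with extended-real endpoints. -/
def rect {p : ℕ} (a b : Fin p → EReal) : Set (Fin p → ℝ) :=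
  {x | ∀ j, a j ≤ (x j : EReal) ∧ (x j : EReal) ≤ b j}

/-- `ρ_{n,𝒜^{re}}`. -/
noncomputable def rhoRe {Ω : Type*} [MeasurableSpace Ω] (μ : Measure Ω) {p : ℕ}
    (T : Ω → Fin p → ℝ) : ℝ :=
  ⨆ (a : Fin p → EReal) (b : Fin p → EReal),
    |(μ (T ⁻¹' rect a b)).toReal - (stdGaussianPi p (rect a b)).toReal|

/-- `Φ`, the standard normal cumulative distribution function. -/
noncomputable def Phi (t : ℝ) : ℝ := ((gaussianReal 0 1) (Set.Iic t)).toReal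

/- ### Auxiliary lemmas -/

lemma aux_pdf_eq (x : ℝ) :
    gaussianPDFReal 0 1 x = (Real.sqrt (2*π))⁻¹ * Real.exp (-x^2/2) := by
  simp [gaussianPDFReal]

lemma aux_key_alg {x s : ℝ} (hx : 0 ≤ x) (hs : s^2 = x^2+4) (hs0 : 0 ≤ s) :
    x*(x^2+3) ≤ (x^2+1)*s := by
  have h4 : ((x^2+1)*s)^2 = (x*(x^2+3))^2 + 4 := by
    have : ((x^2+1)*s)^2 = (x^2+1)^2 * s^2 := by ring
    rw [this, hs]; ring
  have hs2 : 2 ≤ s := by nlinarith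
  have hB : 0 ≤ x*(x^2+3) := by positivity
  have hA : 2 ≤ (x^2+1)*s := by nlinarith
  nlinarith [h4, hA, hB]

lemma aux_hasDerivAt_F (x : ℝ) :
    HasDerivAt (fun y => -((Real.sqrt (2*π))⁻¹ * Real.exp (-y^2/2) * ((Real.sqrt (y^2+4) - y)/2)))
      ((Real.sqrt (2*π))⁻¹ * Real.exp (-x^2/2)
        * ((x * (Real.sqrt (x^2+4) - x) - (x / Real.sqrt (x^2+4) - 1))/2)) x := by
  have hs4 : (0:ℝ) < x^2+4 := by positivity
  have hs0 : 0 < Real.sqrt (x^2+4) := Real.sqrt_pos.mpr hs4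
  have hu : HasDerivAt (fun y : ℝ => y^2+4) (2*x) x := by
    simpa using (hasDerivAt_pow 2 x).add_const 4
  have hsq : HasDerivAt (fun y => Real.sqrt (y^2+4)) (x / Real.sqrt (x^2+4)) x := by
    have := (Real.hasDerivAt_sqrt (ne_of_gt hs4)).comp x hu
    refine this.congr_deriv ?_
    field_simp
  have hh : HasDerivAt (fun y => (Real.sqrt (y^2+4) - y)/2)
      ((x / Real.sqrt (x^2+4) - 1)/2) x := (hsq.sub (hasDerivAt_id x)).div_const 2
  have he : HasDerivAt (fun y : ℝ => -y^2/2) (-x) x := by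
    have h := ((hasDerivAt_pow 2 x).neg.div_const 2)
    refine h.congr_deriv ?_
    push_cast
    ring
  have hphi : HasDerivAt (fun y => (Real.sqrt (2*π))⁻¹ * Real.exp (-y^2/2))
      ((Real.sqrt (2*π))⁻¹ * (Real.exp (-x^2/2) * (-x))) x := (he.exp.const_mul _)
  have := (hphi.mul hh).neg
  refine this.congr_deriv ?_
  ring

lemma aux_w_nonneg {x : ℝ} (hx : 0 ≤ x) :
    0 ≤ (x * (Real.sqrt (x^2+4) - x) - (x / Real.sqrt (x^2+4) - 1))/2 := by
  have hs4 : (0:ℝ) < x^2+4 := by positivity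
  have hs0 : 0 < Real.sqrt (x^2+4) := Real.sqrt_pos.mpr hs4
  have hxs : x ≤ Real.sqrt (x^2+4) := by
    have : x = Real.sqrt (x^2) := by rw [Real.sqrt_sq hx]
    rw [this]
    exact Real.sqrt_le_sqrt (by nlinarith)
  have h1 : 0 ≤ x * (Real.sqrt (x^2+4) - x) := mul_nonneg hx (by linarith)
  have h2 : x / Real.sqrt (x^2+4) ≤ 1 := (div_le_one hs0).mpr hxs
  linarith

lemma aux_w_le_one {x : ℝ} (hx : 0 ≤ x) :
    (x * (Real.sqrt (x^2+4) - x) - (x / Real.sqrt (x^2+4) - 1))/2 ≤ 1 := by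
  have hs4 : (0:ℝ) < x^2+4 := by positivity
  set s := Real.sqrt (x^2+4) with hsdef
  have hs0 : 0 < s := Real.sqrt_pos.mpr hs4
  have hs : s^2 = x^2+4 := Real.sq_sqrt hs4.le
  have key := aux_key_alg hx hs hs0.le
  have hd : x / s * s = x := div_mul_cancel₀ x (ne_of_gt hs0)
  nlinarith [key, hs, hs0, hd]

lemma aux_h_le_one {x : ℝ} (hx : 0 ≤ x) : (Real.sqrt (x^2+4) - x)/2 ≤ 1 := by
  have h1 : Real.sqrt (x^2+4) ≤ x + 2 := by
    have : Real.sqrt (x^2+4) ≤ Real.sqrt ((x+2)^2) := Real.sqrt_le_sqrt (by nlinarith)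
    rwa [Real.sqrt_sq (by linarith)] at this
  linarith

lemma aux_h_nonneg {x : ℝ} (hx : 0 ≤ x) : 0 ≤ (Real.sqrt (x^2+4) - x)/2 := by
  have hxs : x ≤ Real.sqrt (x^2+4) := by
    have : x = Real.sqrt (x^2) := by rw [Real.sqrt_sq hx]
    rw [this]
    exact Real.sqrt_le_sqrt (by nlinarith)
  linarith

lemma aux_tendsto_F :
    Tendsto (fun y => -((Real.sqrt (2*π))⁻¹ * Real.exp (-y^2/2) * ((Real.sqrt (y^2+4) - y)/2)))
      atTop (nhds 0) := by
  have h1 : Tendsto (fun x:ℝ => -x^2/2) atTop atBot := by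
    have h2 : Tendsto (fun x:ℝ => x^2) atTop atTop := tendsto_pow_atTop two_ne_zero
    have h3 := tendsto_neg_atTop_atBot.comp h2
    have := h3.atBot_div_const (show (0:ℝ) < 2 by norm_num)
    simpa [Function.comp] using this
  have hphi : Tendsto (fun x:ℝ => (Real.sqrt (2*π))⁻¹ * Real.exp (-x^2/2)) atTop (nhds 0) := by
    have := (Real.tendsto_exp_atBot.comp h1).const_mul ((Real.sqrt (2*π))⁻¹)
    simpa [Function.comp] using this
  have hsq : Tendsto
      (fun y:ℝ => (Real.sqrt (2*π))⁻¹ * Real.exp (-y^2/2) * ((Real.sqrt (y^2+4) - y)/2))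
      atTop (nhds 0) := by
    apply tendsto_of_tendsto_of_tendsto_of_le_of_le' tendsto_const_nhds hphi
    · filter_upwards [eventually_ge_atTop (0:ℝ)] with x hx
      exact mul_nonneg (by positivity) (aux_h_nonneg hx)
    · filter_upwards [eventually_ge_atTop (0:ℝ)] with x hx
      exact mul_le_of_le_one_right (by positivity) (aux_h_le_one hx)
  simpa using hsq.neg

lemma aux_tail_lb {t : ℝ} (ht : 0 ≤ t) :
    (Real.sqrt (2*π))⁻¹ * Real.exp (-t^2/2) * ((Real.sqrt (t^2+4) - t)/2)
      ≤ ((gaussianReal 0 1) (Set.Ioi t)).toReal := by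
  set F' : ℝ → ℝ := fun x => (Real.sqrt (2*π))⁻¹ * Real.exp (-x^2/2)
    * ((x * (Real.sqrt (x^2+4) - x) - (x / Real.sqrt (x^2+4) - 1))/2) with hF'
  have hderiv : ∀ x ∈ Set.Ici t, HasDerivAt
      (fun y => -((Real.sqrt (2*π))⁻¹ * Real.exp (-y^2/2) * ((Real.sqrt (y^2+4) - y)/2)))
      (F' x) x := fun x _ => aux_hasDerivAt_F x
  have hpos : ∀ x ∈ Set.Ioi t, 0 ≤ F' x := by
    intro x hx
    exact mul_nonneg (by positivity) (aux_w_nonneg (le_trans ht (le_of_lt hx)))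
  have hint := integral_Ioi_of_hasDerivAt_of_nonneg' hderiv hpos aux_tendsto_F
  have hintg := integrableOn_Ioi_deriv_of_nonneg' hderiv hpos aux_tendsto_F
  have hmono : ∫ x in Set.Ioi t, F' x ≤ ∫ x in Set.Ioi t, gaussianPDFReal 0 1 x := by
    apply setIntegral_mono_on hintg ((integrable_gaussianPDFReal 0 1).integrableOn)
      measurableSet_Ioi
    intro x hx
    rw [aux_pdf_eq]
    exact mul_le_of_le_one_right (by positivity) (aux_w_le_one (le_trans ht (le_of_lt hx)))
  have happly : ((gaussianReal 0 1) (Set.Ioi t)).toReal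
      = ∫ x in Set.Ioi t, gaussianPDFReal 0 1 x := by
    rw [gaussianReal_apply_eq_integral 0 one_ne_zero (Set.Ioi t), ENNReal.toReal_ofReal]
    exact setIntegral_nonneg measurableSet_Ioi (fun x _ => gaussianPDFReal_nonneg 0 1 x)
  rw [happly]
  calc (Real.sqrt (2*π))⁻¹ * Real.exp (-t^2/2) * ((Real.sqrt (t^2+4) - t)/2)
      = ∫ x in Set.Ioi t, F' x := by rw [hint]; ring
    _ ≤ _ := hmono

lemma aux_Phi_le {t : ℝ} (ht : 0 ≤ t) :
    Phi t ≤ 1 - 2 * Real.exp (-t^2/2) / (Real.sqrt (2*π) * (Real.sqrt (t^2+4) + t)) := by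
  have hs4 : (0:ℝ) < t^2+4 := by positivity
  have hs : (Real.sqrt (t^2+4))^2 = t^2+4 := Real.sq_sqrt hs4.le
  have hs2 : 2 ≤ Real.sqrt (t^2+4) := by nlinarith [Real.sqrt_nonneg (t^2+4)]
  have hst : 0 < Real.sqrt (t^2+4) + t := by linarith
  have hsp : 0 < Real.sqrt (2*π) := Real.sqrt_pos.mpr (by positivity)
  have hcompl : ((gaussianReal 0 1) (Set.Ioi t)).toReal = 1 - Phi t := by
    rw [← Set.compl_Iic, prob_compl_eq_one_sub measurableSet_Iic,
      ENNReal.toReal_sub_of_le prob_le_one ENNReal.one_ne_top]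
    simp [Phi]
  have htail := aux_tail_lb ht
  rw [hcompl] at htail
  have heq : (Real.sqrt (2*π))⁻¹ * Real.exp (-t^2/2) * ((Real.sqrt (t^2+4) - t)/2)
      = 2 * Real.exp (-t^2/2) / (Real.sqrt (2*π) * (Real.sqrt (t^2+4) + t)) := by
    have h44 : (Real.sqrt (t^2+4) - t) * (Real.sqrt (t^2+4) + t) = 4 := by nlinarith [hs]
    rw [eq_div_iff (by positivity)]
    field_simp
    linear_combination h44
  linarith [heq ▸ htail]

lemma aux_Phi_nonneg (t : ℝ) : 0 ≤ Phi t := ENNReal.toReal_nonneg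

lemma aux_Phi_le_one (t : ℝ) : Phi t ≤ 1 := by
  have := ENNReal.toReal_mono (measure_ne_top (gaussianReal 0 1) Set.univ)
    (measure_mono (Set.subset_univ (Set.Iic t)))
  simpa [Phi] using this

lemma aux_Phi_sqrt_le (n : ℕ) :
    Phi (Real.sqrt n) ≤ 1 - 2 * Real.exp (-(n:ℝ)/2)
      / (Real.sqrt (2*π) * (Real.sqrt ((n:ℝ)+4) + Real.sqrt n)) := by
  have h := aux_Phi_le (Real.sqrt_nonneg (n:ℝ))
  rwa [Real.sq_sqrt (Nat.cast_nonneg n)] at h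

lemma aux_cp_one (n : ℕ) :
    2 * Real.exp (-(n:ℝ)/2) / (Real.sqrt (2*π) * (Real.sqrt ((n:ℝ)+4) + Real.sqrt n))
      * (Real.sqrt (π/2) * (Real.sqrt ((n:ℝ)+4) + Real.sqrt n) * Real.exp ((n:ℝ)/2)) = 1 := by
  have h2 : Real.sqrt (2*π) = Real.sqrt 2 * Real.sqrt π := Real.sqrt_mul (by norm_num) π
  have hq : Real.sqrt (π/2) = Real.sqrt π / Real.sqrt 2 := Real.sqrt_div pi_nonneg 2
  have he : Real.exp (-(n:ℝ)/2) * Real.exp ((n:ℝ)/2) = 1 := by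
    rw [← Real.exp_add, show -(n:ℝ)/2 + (n:ℝ)/2 = 0 by ring, Real.exp_zero]
  have h22 : Real.sqrt 2 * Real.sqrt 2 = 2 := Real.mul_self_sqrt (by norm_num)
  have hS : 0 < Real.sqrt ((n:ℝ)+4) + Real.sqrt n := by
    have h1 : 0 < Real.sqrt ((n:ℝ)+4) := Real.sqrt_pos.mpr (by positivity)
    have h2 := Real.sqrt_nonneg (n:ℝ)
    linarith
  have hs2 : 0 < Real.sqrt 2 := Real.sqrt_pos.mpr (by norm_num)
  have hsp : 0 < Real.sqrt π := Real.sqrt_pos.mpr pi_pos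
  rw [h2, hq]
  field_simp
  rw [neg_div] at he
  linear_combination 2 * he - h22

lemma aux_pow_le_two_div_e (n pn : ℕ)
    (hP : Real.sqrt (π/2) * (Real.sqrt ((n:ℝ)+4) + Real.sqrt n) * Real.exp ((n:ℝ)/2) ≤ (pn:ℝ)) :
    Phi (Real.sqrt n) ^ pn ≤ 2 / Real.exp 1 := by
  set c := 2 * Real.exp (-(n:ℝ)/2) / (Real.sqrt (2*π) * (Real.sqrt ((n:ℝ)+4) + Real.sqrt n))
    with hc
  have hS : 0 < Real.sqrt ((n:ℝ)+4) + Real.sqrt n := by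
    have h1 : 0 < Real.sqrt ((n:ℝ)+4) := Real.sqrt_pos.mpr (by positivity)
    have h2 := Real.sqrt_nonneg (n:ℝ)
    linarith
  have hc0 : 0 ≤ c := by rw [hc]; positivity
  have hcp : 1 ≤ c * pn := by
    calc (1:ℝ) = c * (Real.sqrt (π/2) * (Real.sqrt ((n:ℝ)+4) + Real.sqrt n)
          * Real.exp ((n:ℝ)/2)) := (aux_cp_one n).symm
      _ ≤ c * pn := mul_le_mul_of_nonneg_left hP hc0
  have hbase := aux_Phi_sqrt_le n
  have h0 := aux_Phi_nonneg (Real.sqrt n)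
  have h1c : 0 ≤ 1 - c := le_trans h0 hbase
  calc Phi (Real.sqrt n) ^ pn ≤ (1-c)^pn := pow_le_pow_left₀ h0 hbase pn
    _ ≤ Real.exp (-c) ^ pn :=
        pow_le_pow_left₀ h1c (by nlinarith [Real.add_one_le_exp (-c)]) pn
    _ = Real.exp (-(c*pn)) := by rw [← Real.exp_nat_mul]; congr 1; ring
    _ ≤ Real.exp (-1) := Real.exp_le_exp.mpr (by linarith)
    _ ≤ 2 / Real.exp 1 := by
        rw [Real.exp_neg, div_eq_mul_inv]
        have := inv_nonneg.mpr (Real.exp_pos 1).le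
        linarith

instance aux_instProbStdGaussianPi (p : ℕ) : IsProbabilityMeasure (stdGaussianPi p) := by
  unfold stdGaussianPi; infer_instance

lemma aux_part1 {Ω : Type*} [MeasurableSpace Ω] (μ : Measure Ω) [IsProbabilityMeasure μ]
    {n pn : ℕ} (X : Fin n → Ω → Fin pn → ℝ) (hmeas : ∀ i, Measurable (X i))
    (hdist : ∀ i j, Measure.map (fun ω => X i ω j) μ = radMeasure) :
    μ {ω | ∀ j, (Real.sqrt n)⁻¹ * ∑ i, X i ω j ≤ Real.sqrt n} = 1 := by
  have hmc : ∀ (i : Fin n) (j : Fin pn), Measurable (fun ω => X i ω j) :=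
    fun i j => (measurable_pi_apply j).comp (hmeas i)
  have hone : ∀ i j, μ {ω | X i ω j ≤ 1} = 1 := by
    intro i j
    have : μ {ω | X i ω j ≤ 1} = Measure.map (fun ω => X i ω j) μ (Set.Iic 1) := by
      rw [Measure.map_apply (hmc i j) measurableSet_Iic]; rfl
    rw [this, hdist i j]
    simp only [radMeasure, Measure.coe_add, Measure.coe_smul, Pi.add_apply, Pi.smul_apply,
      smul_eq_mul]
    rw [Measure.dirac_apply_of_mem (by norm_num : (1:ℝ) ∈ Set.Iic 1),
      Measure.dirac_apply_of_mem (by norm_num : (-1:ℝ) ∈ Set.Iic 1)]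
    simp [ENNReal.inv_two_add_inv_two]
  have hIm : ∀ (i : Fin n) (j : Fin pn), MeasurableSet {ω | X i ω j ≤ 1} :=
    fun i j => measurableSet_le (hmc i j) measurable_const
  have hInt : μ (⋂ i, ⋂ j, {ω | X i ω j ≤ 1}) = 1 := by
    rw [← prob_compl_eq_zero_iff (MeasurableSet.iInter fun i => MeasurableSet.iInter (hIm i))]
    rw [Set.compl_iInter]
    refine measure_iUnion_null fun i => ?_
    rw [Set.compl_iInter]
    refine measure_iUnion_null fun j => ?_
    rw [measure_compl (hIm i j) (measure_ne_top μ _), hone i j, measure_univ, tsub_self]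
  refine le_antisymm prob_le_one ?_
  rw [← hInt]
  refine measure_mono ?_
  intro ω hω
  simp only [Set.mem_iInter, Set.mem_setOf_eq] at hω ⊢
  intro j
  have hsum : ∑ i, X i ω j ≤ (n:ℝ) := by
    calc ∑ i, X i ω j ≤ ∑ _i : Fin n, (1:ℝ) := Finset.sum_le_sum (fun i _ => hω i j)
      _ = n := by simp
  have h0 : 0 ≤ (Real.sqrt n)⁻¹ := by positivity
  calc (Real.sqrt n)⁻¹ * ∑ i, X i ω j ≤ (Real.sqrt n)⁻¹ * n :=
        mul_le_mul_of_nonneg_left hsum h0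
    _ ≤ Real.sqrt n := by
        rcases Nat.eq_zero_or_pos n with h | h
        · simp [h]
        · have hpos : 0 < Real.sqrt n := Real.sqrt_pos.mpr (by exact_mod_cast h)
          rw [inv_mul_le_iff₀ hpos, Real.mul_self_sqrt (by positivity)]

lemma aux_rect_bot (pn : ℕ) (c : ℝ) :
    rect (fun _ : Fin pn => (⊥ : EReal)) (fun _ => (c : EReal))
      = Set.pi Set.univ (fun _ => Set.Iic c) := by
  ext x
  simp [rect, EReal.coe_le_coe_iff, Pi.le_def]

lemma aux_gauss_rect (pn : ℕ) (c : ℝ) :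
    (stdGaussianPi pn (rect (fun _ : Fin pn => (⊥ : EReal)) (fun _ => (c : EReal)))).toReal
      = Phi c ^ pn := by
  rw [aux_rect_bot, stdGaussianPi, Measure.pi_pi]
  rw [ENNReal.toReal_prod]
  simp [Phi]

lemma aux_le_rhoRe {Ω : Type*} [MeasurableSpace Ω] (μ : Measure Ω) [IsProbabilityMeasure μ]
    {pn : ℕ} (T : Ω → Fin pn → ℝ) (a b : Fin pn → EReal) :
    |(μ (T ⁻¹' rect a b)).toReal - (stdGaussianPi pn (rect a b)).toReal| ≤ rhoRe μ T := by
  have hb : ∀ (a b : Fin pn → EReal),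
      |(μ (T ⁻¹' rect a b)).toReal - (stdGaussianPi pn (rect a b)).toReal| ≤ 1 := by
    intro a b
    rw [abs_sub_le_iff]
    have h1 : (μ (T ⁻¹' rect a b)).toReal ≤ 1 := by
      calc (μ (T ⁻¹' rect a b)).toReal ≤ (μ Set.univ).toReal :=
        ENNReal.toReal_mono (measure_ne_top μ _) (measure_mono (Set.subset_univ _))
        _ = 1 := by simp
    have h2 : (stdGaussianPi pn (rect a b)).toReal ≤ 1 := by
      calc (stdGaussianPi pn (rect a b)).toReal ≤ (stdGaussianPi pn Set.univ).toReal :=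
        ENNReal.toReal_mono (measure_ne_top _ _) (measure_mono (Set.subset_univ _))
        _ = 1 := by simp
    constructor
    · linarith [ENNReal.toReal_nonneg (a := stdGaussianPi pn (rect a b))]
    · linarith [ENNReal.toReal_nonneg (a := μ (T ⁻¹' rect a b))]
  have h1 : ∀ a : Fin pn → EReal, BddAbove (Set.range fun b =>
      |(μ (T ⁻¹' rect a b)).toReal - (stdGaussianPi pn (rect a b)).toReal|) := by
    intro a
    exact ⟨1, by rintro _ ⟨b, rfl⟩; exact hb a b⟩
  have h2 : BddAbove (Set.range fun a : Fin pn → EReal => ⨆ b,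
      |(μ (T ⁻¹' rect a b)).toReal - (stdGaussianPi pn (rect a b)).toReal|) := by
    exact ⟨1, by rintro _ ⟨a, rfl⟩; exact ciSup_le (hb a)⟩
  exact le_trans (le_ciSup (h1 a) b) (le_ciSup h2 a)

/-- Case (I) in the proof of Theorem 2.3: for iid Rademacher entries and
`A = (−∞, √n]^p`, `P(T_n ∈ A) = 1` while `[Φ(√n)]^p ≤ [1 − 2e^{−n/2}/(√(2π)(√(n+4)+√n))]^p`,
and if `p ≥ √(π/2)(√(n+4)+√n)e^{n/2}` then `[Φ(√n)]^p ≤ 2/e` for all sufficiently large `n`;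
consequently `ρ_{n,𝒜^{re}} ≥ 1 − 2/e` for all sufficiently large `n`. -/
theorem statement11
    {Ω : Type*} [MeasurableSpace Ω] (μ : Measure Ω) [IsProbabilityMeasure μ]
    (p : ℕ → ℕ)
    (X : (n : ℕ) → Fin n → Ω → Fin (p n) → ℝ)
    (hmeas : ∀ n i, Measurable (X n i))
    -- the `X_{ij}` are independent across `i` and `j`
    (hindep : ∀ n, iIndepFun
      (fun ij : Fin n × Fin (p n) => fun ω => X n ij.1 ω ij.2) μ)
    -- each `X_{ij}` is Rademacher
    (hdist : ∀ n i j, Measure.map (fun ω => X n i ω j) μ = radMeasure) :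
    -- `P(T_n ∈ (−∞, √n]^p) = 1`
    (∀ n : ℕ, μ {ω | ∀ j, (Real.sqrt n)⁻¹ * ∑ i, X n i ω j ≤ Real.sqrt n} = 1) ∧
    -- `[Φ(√n)]^p ≤ [1 − 2e^{−n/2}/(√(2π)(√(n+4)+√n))]^p`
    (∀ n : ℕ, Phi (Real.sqrt n) ^ p n
      ≤ (1 - 2 * Real.exp (-(n : ℝ) / 2)
            / (Real.sqrt (2 * π) * (Real.sqrt ((n : ℝ) + 4) + Real.sqrt n))) ^ p n) ∧
    -- under the stated growth of `p`:
    ((∀ n : ℕ, Real.sqrt (π / 2) * (Real.sqrt ((n : ℝ) + 4) + Real.sqrt n)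
          * Real.exp ((n : ℝ) / 2) ≤ p n) →
      (∀ᶠ n : ℕ in atTop, Phi (Real.sqrt n) ^ p n ≤ 2 / Real.exp 1) ∧
      (∀ᶠ n : ℕ in atTop,
        1 - 2 / Real.exp 1
          ≤ rhoRe μ (fun ω j => (Real.sqrt n)⁻¹ * ∑ i, X n i ω j))) := by
  have hpart1 : ∀ n : ℕ,
      μ {ω | ∀ j, (Real.sqrt n)⁻¹ * ∑ i, X n i ω j ≤ Real.sqrt n} = 1 :=
    fun n => aux_part1 μ (X n) (hmeas n) (fun i j => hdist n i j)
  refine ⟨hpart1, ?_, ?_⟩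
  · intro n
    exact pow_le_pow_left₀ (aux_Phi_nonneg _) (aux_Phi_sqrt_le n) (p n)
  · intro hp
    have hpow : ∀ n : ℕ, Phi (Real.sqrt n) ^ p n ≤ 2 / Real.exp 1 :=
      fun n => aux_pow_le_two_div_e n (p n) (hp n)
    refine ⟨Eventually.of_forall hpow, Eventually.of_forall ?_⟩
    intro n
    set T : Ω → Fin (p n) → ℝ := fun ω j => (Real.sqrt n)⁻¹ * ∑ i, X n i ω j with hT
    set a : Fin (p n) → EReal := fun _ => (⊥ : EReal) with ha
    set b : Fin (p n) → EReal := fun _ => ((Real.sqrt n : ℝ) : EReal) with hbb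
    have hset : T ⁻¹' rect a b
        = {ω | ∀ j, (Real.sqrt n)⁻¹ * ∑ i, X n i ω j ≤ Real.sqrt n} := by
      ext ω
      simp [rect, ha, hbb, hT, EReal.coe_le_coe_iff]
    have hmu : (μ (T ⁻¹' rect a b)).toReal = 1 := by
      rw [hset, hpart1 n, ENNReal.toReal_one]
    have hg : (stdGaussianPi (p n) (rect a b)).toReal = Phi (Real.sqrt n) ^ p n :=
      aux_gauss_rect (p n) (Real.sqrt n)
    have habs : |(μ (T ⁻¹' rect a b)).toReal - (stdGaussianPi (p n) (rect a b)).toReal|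
        = 1 - Phi (Real.sqrt n) ^ p n := by
      rw [hmu, hg, abs_of_nonneg]
      have := pow_le_one₀ (n := p n) (aux_Phi_nonneg (Real.sqrt n)) (aux_Phi_le_one (Real.sqrt n))
      linarith
    calc 1 - 2 / Real.exp 1 ≤ 1 - Phi (Real.sqrt n) ^ p n := by linarith [hpow n]
      _ = |(μ (T ⁻¹' rect a b)).toReal - (stdGaussianPi (p n) (rect a b)).toReal| := habs.symm
      _ ≤ rhoRe μ T := aux_le_rhoRe μ T a b
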